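/- Let A₁, …, A_k be finite nonempty sets of integers, and for each i let A_i' ⊆ A_i be the set consisting of the minimum and maximum elements of A_i. Let S = A₁ + ⋯ + A_k, S_i = A₁ + ⋯ + A_{i−1} + A_{i+1} + ⋯ + A_k, S_i' = A₁ + ⋯ + A_{i−1} + A_i' + A_{i+1} + ⋯ + A_k, and S' = ⋃_{i=1}^k S_i'. Then |S| ≥ |S'| ≥ (1/(k−1)) ∑_{i=1}^k |S_i| − 1/(k−1). -/

import Mathlib

open Pointwise Finset

/-- Bounds for elements of a pointwise sum of finsets of integers. -/
lemma mem_finsetSum_bounds {ι : Type*} (s : Finset ι) (f : ι → Finset ℤ)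
    (m M : ι → ℤ) (h : ∀ j ∈ s, ∀ y ∈ f j, m j ≤ y ∧ y ≤ M j) :
    ∀ x ∈ ∑ j ∈ s, f j, (∑ j ∈ s, m j) ≤ x ∧ x ≤ ∑ j ∈ s, M j := by
  classical
  induction s using Finset.cons_induction with
  | empty =>
      intro x hx
      simp only [Finset.sum_empty] at hx ⊢
      have : x = 0 := by simpa [Finset.mem_zero] using hx
      simp [this]
  | cons i s hi ih =>
      intro x hx
      rw [Finset.sum_cons, Finset.mem_add] at hx
      obtain ⟨y, hy, z, hz, rfl⟩ := hx
      have h1 := h i (Finset.mem_cons_self _ _) y hy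
      have h2 := ih (fun j hj y hy => h j (Finset.mem_cons_of_mem hj) y hy) z hz
      rw [Finset.sum_cons, Finset.sum_cons]
      exact ⟨add_le_add h1.1 h2.1, add_le_add h1.2 h2.2⟩

/-- Existence of the tile containing a point, for a monotone-step sequence. -/
lemma exists_tile (T : ℕ → ℤ) (hT : ∀ m : ℕ, T m ≤ T (m + 1)) :
    ∀ n : ℕ, ∀ s : ℤ, T 0 < s → s ≤ T n → ∃ m : ℕ, m < n ∧ T m < s ∧ s ≤ T (m + 1) := by
  intro n
  induction n with
  | zero => intro s h1 h2; exact absurd (h1.trans_le h2) (lt_irrefl _)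
  | succ n ih =>
      intro s h1 h2
      by_cases hc : s ≤ T n
      · obtain ⟨m, hm, h3, h4⟩ := ih s h1 hc
        exact ⟨m, hm.trans (Nat.lt_succ_self n), h3, h4⟩
      · exact ⟨n, Nat.lt_succ_self n, lt_of_not_ge hc, h2⟩

/-- Main combinatorial lemma (Gyarmati–Matolcsi–Ruzsa superadditivity), with abstract
extremal elements `a i`, `b i` of the sets `A i`. -/
lemma gmr_main (k : ℕ) (hk : 2 ≤ k) (A : Fin k → Finset ℤ) (a b : Fin k → ℤ)
    (haA : ∀ i, a i ∈ A i) (hbA : ∀ i, b i ∈ A i)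
    (hal : ∀ i, ∀ y ∈ A i, a i ≤ y) (hbu : ∀ i, ∀ y ∈ A i, y ≤ b i) :
    (Finset.univ.biUnion fun i =>
        ({a i, b i} : Finset ℤ) + ∑ j ∈ Finset.univ.erase i, A j).card
        ≤ (∑ i, A i).card ∧
    (∑ i, (∑ j ∈ Finset.univ.erase i, A j).card) - 1 ≤
      (k - 1) * (Finset.univ.biUnion fun i =>
        ({a i, b i} : Finset ℤ) + ∑ j ∈ Finset.univ.erase i, A j).card := by
  classical
  set Si : Fin k → Finset ℤ := fun i => ∑ j ∈ Finset.univ.erase i, A j with hSi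
  set S' : Finset ℤ :=
    Finset.univ.biUnion (fun i => ({a i, b i} : Finset ℤ) + Si i) with hS'
  -- basic facts
  have hab : ∀ i, a i ≤ b i := fun i => hal i (b i) (hbA i)
  have hpair_sub : ∀ i, ({a i, b i} : Finset ℤ) ⊆ A i := by
    intro i x hx
    rcases Finset.mem_insert.1 hx with h | h
    · rw [h]; exact haA i
    · rw [Finset.mem_singleton.1 h]; exact hbA i
  -- Part 1 : S' ⊆ ∑ A i
  have part1 : S'.card ≤ (∑ i, A i).card := by
    apply Finset.card_le_card
    rw [hS']
    apply Finset.biUnion_subset.2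
    intro i _
    have h1 : ({a i, b i} : Finset ℤ) + Si i ⊆ A i + Si i :=
      Finset.add_subset_add_right (hpair_sub i)
    have h2 : A i + Si i = ∑ j, A j := by
      rw [hSi]
      exact Finset.add_sum_erase Finset.univ A (Finset.mem_univ i)
    rw [← h2]
    exact h1
  refine ⟨part1, ?_⟩
  -- Part 2
  set μ : ℤ := ∑ j, a j with hμ
  set σb : ℤ := ∑ j, b j with hσ
  -- the threshold sequence
  set T : ℕ → ℤ :=
    fun n => μ + ∑ j ∈ Finset.univ.filter (fun j : Fin k => (j : ℕ) < n), (b j - a j) with hT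
  have hd : ∀ j : Fin k, (0 : ℤ) ≤ b j - a j := fun j => sub_nonneg.2 (hab j)
  have hTstep : ∀ m : ℕ, T m ≤ T (m + 1) := by
    intro m
    rw [hT]
    simp only
    apply add_le_add_right
    apply Finset.sum_le_sum_of_subset_of_nonneg
    · intro j hj
      simp only [Finset.mem_filter, Finset.mem_univ, true_and] at hj ⊢
      omega
    · intro j _ _
      exact hd j
  have hfilter_succ : ∀ (m : ℕ) (hm : m < k),
      Finset.univ.filter (fun j : Fin k => (j : ℕ) < m + 1) =
      insert ⟨m, hm⟩ (Finset.univ.filter (fun j : Fin k => (j : ℕ) < m)) := by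
    intro m hm
    ext j
    simp only [Finset.mem_filter, Finset.mem_univ, true_and, Finset.mem_insert, Fin.ext_iff]
    omega
  have hTsucc : ∀ (m : ℕ) (hm : m < k),
      T (m + 1) = T m + (b ⟨m, hm⟩ - a ⟨m, hm⟩) := by
    intro m hm
    rw [hT]
    simp only
    rw [hfilter_succ m hm, Finset.sum_insert (by simp)]
    ring
  have hT0 : T 0 = μ := by
    rw [hT]
    simp
  have hTk : T k = σb := by
    rw [hT]
    simp only
    have : Finset.univ.filter (fun j : Fin k => (j : ℕ) < k) = Finset.univ := by
      apply Finset.filter_true_of_mem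
      intro j _
      exact j.isLt
    rw [this, Finset.sum_sub_distrib, hμ, hσ]
    ring
  -- bounds on elements of Si i
  have hSi_bounds : ∀ i, ∀ x ∈ Si i,
      (∑ j ∈ Finset.univ.erase i, a j) ≤ x ∧ x ≤ ∑ j ∈ Finset.univ.erase i, b j := by
    intro i
    exact mem_finsetSum_bounds _ A a b
      (fun j _ y hy => ⟨hal j y hy, hbu j y hy⟩)
  -- bounds on elements of S'
  have hS'_bounds : ∀ s ∈ S', μ ≤ s ∧ s ≤ σb := by
    intro s hs
    rw [hS'] at hs
    obtain ⟨i, _, hmem⟩ := Finset.mem_biUnion.1 hs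
    rw [Finset.mem_add] at hmem
    obtain ⟨c, hc, x, hx, rfl⟩ := hmem
    have hca : a i ≤ c := hal i c (hpair_sub i hc)
    have hcb : c ≤ b i := hbu i c (hpair_sub i hc)
    have hxb := hSi_bounds i x hx
    constructor
    · have h1 : a i + (∑ j ∈ Finset.univ.erase i, a j) = μ :=
        Finset.add_sum_erase Finset.univ a (Finset.mem_univ i)
      calc μ = a i + (∑ j ∈ Finset.univ.erase i, a j) := h1.symm
        _ ≤ c + x := add_le_add hca hxb.1
    · have h1 : b i + (∑ j ∈ Finset.univ.erase i, b j) = σb :=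
        Finset.add_sum_erase Finset.univ b (Finset.mem_univ i)
      calc c + x ≤ b i + (∑ j ∈ Finset.univ.erase i, b j) := add_le_add hcb hxb.2
        _ = σb := h1
  -- the pieces
  set Low : Fin k → Finset ℤ :=
    fun i => ((Si i).image (fun x => a i + x)).filter (fun s => s ≤ T i) with hLow
  set High : Fin k → Finset ℤ :=
    fun i => ((Si i).image (fun x => b i + x)).filter (fun s => T ((i : ℕ) + 1) < s) with hHigh
  set V : Fin k → Finset ℤ := fun i => Low i ∪ High i with hV
  -- step A : card (Si i) ≤ card (V i)
  have stepA : ∀ i, (Si i).card ≤ (V i).card := by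
    intro i
    have hsplit := Finset.card_filter_add_card_filter_not
      (s := Si i) (p := fun x => a i + x ≤ T i)
    set P₁ := (Si i).filter (fun x => a i + x ≤ T i) with hP₁
    set P₂ := (Si i).filter (fun x => ¬ (a i + x ≤ T i)) with hP₂
    have hinj : Function.Injective (fun x : ℤ => a i + x) := fun x y h => by
      simpa using h
    have hinj' : Function.Injective (fun x : ℤ => b i + x) := fun x y h => by
      simpa using h
    have h1 : P₁.card ≤ (Low i).card := by
      rw [← Finset.card_image_of_injective P₁ hinj]
      apply Finset.card_le_card
      intro y hy
      obtain ⟨x, hx, rfl⟩ := Finset.mem_image.1 hy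
      rw [hP₁, Finset.mem_filter] at hx
      rw [hLow]
      exact Finset.mem_filter.2 ⟨Finset.mem_image_of_mem _ hx.1, hx.2⟩
    have h2 : P₂.card ≤ (High i).card := by
      rw [← Finset.card_image_of_injective P₂ hinj']
      apply Finset.card_le_card
      intro y hy
      obtain ⟨x, hx, rfl⟩ := Finset.mem_image.1 hy
      rw [hP₂, Finset.mem_filter] at hx
      rw [hHigh]
      refine Finset.mem_filter.2 ⟨Finset.mem_image_of_mem _ hx.1, ?_⟩
      have hgt : T i < a i + x := lt_of_not_ge hx.2
      have := hTsucc i i.isLt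
      have heta : (⟨(i : ℕ), i.isLt⟩ : Fin k) = i := by
        apply Fin.ext
        rfl
      rw [heta] at this
      rw [this]
      linarith
    have hdisj : Disjoint (Low i) (High i) := by
      rw [Finset.disjoint_left]
      intro s hs1 hs2
      rw [hLow, Finset.mem_filter] at hs1
      rw [hHigh, Finset.mem_filter] at hs2
      have := hTstep i
      linarith [hs1.2, hs2.2]
    calc (Si i).card = P₁.card + P₂.card := hsplit.symm
      _ ≤ (Low i).card + (High i).card := Nat.add_le_add h1 h2
      _ = (V i).card := by rw [hV]; exact (Finset.card_union_of_disjoint hdisj).symm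
  -- V i ⊆ S'
  have hV_sub : ∀ i, V i ⊆ S' := by
    intro i s hs
    rw [hS']
    apply Finset.mem_biUnion.2
    refine ⟨i, Finset.mem_univ i, ?_⟩
    rw [hV, Finset.mem_union] at hs
    rcases hs with hs | hs
    · rw [hLow, Finset.mem_filter] at hs
      obtain ⟨x, hx, rfl⟩ := Finset.mem_image.1 hs.1
      exact Finset.add_mem_add (Finset.mem_insert_self _ _) hx
    · rw [hHigh, Finset.mem_filter] at hs
      obtain ⟨x, hx, rfl⟩ := Finset.mem_image.1 hs.1
      exact Finset.add_mem_add
        (Finset.mem_insert_of_mem (Finset.mem_singleton_self _)) hx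
  -- membership in V i constrains position
  have hV_pos : ∀ i, ∀ s ∈ V i, s ≤ T i ∨ T ((i : ℕ) + 1) < s := by
    intro i s hs
    rw [hV, Finset.mem_union] at hs
    rcases hs with hs | hs
    · rw [hLow, Finset.mem_filter] at hs; exact Or.inl hs.2
    · rw [hHigh, Finset.mem_filter] at hs; exact Or.inr hs.2
  -- pointwise bound
  have hpoint : ∀ s ∈ S',
      (∑ i : Fin k, if s ∈ V i then 1 else 0) ≤ (k - 1) + (if s = μ then 1 else 0) := by
    intro s hs
    by_cases hsμ : s = μ
    · have h1 : (∑ i : Fin k, if s ∈ V i then 1 else 0) ≤ ∑ _i : Fin k, 1 := by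
        apply Finset.sum_le_sum
        intro i _
        split <;> omega
      simp only [Finset.sum_const, Finset.card_univ, Fintype.card_fin, smul_eq_mul,
        mul_one] at h1
      rw [if_pos hsμ]
      omega
    · -- find the tile
      have hb1 := hS'_bounds s hs
      have hμs : μ < s := lt_of_le_of_ne hb1.1 (Ne.symm hsμ)
      have hsk : s ≤ T k := by rw [hTk]; exact hb1.2
      have h0s : T 0 < s := by rw [hT0]; exact hμs
      obtain ⟨m, hmk, hts1, hts2⟩ := exists_tile T hTstep k s h0s hsk
      set i₀ : Fin k := ⟨m, hmk⟩ with hi₀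
      have hnotin : s ∉ V i₀ := by
        intro hmem
        rcases hV_pos i₀ s hmem with h | h
        · have : (i₀ : ℕ) = m := rfl
          rw [this] at h
          linarith
        · have : (i₀ : ℕ) = m := rfl
          rw [this] at h
          linarith
      have hsum : (if s ∈ V i₀ then (1:ℕ) else 0) +
          ∑ i ∈ Finset.univ.erase i₀, (if s ∈ V i then (1:ℕ) else 0) =
          ∑ i : Fin k, (if s ∈ V i then (1:ℕ) else 0) :=
        Finset.add_sum_erase Finset.univ
          (fun i => if s ∈ V i then (1:ℕ) else 0) (Finset.mem_univ i₀)
      have h2 : (∑ i ∈ Finset.univ.erase i₀, if s ∈ V i then (1:ℕ) else 0) ≤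
          ∑ _i ∈ Finset.univ.erase i₀, 1 := by
        apply Finset.sum_le_sum
        intro i _
        split <;> omega
      have h3 : (∑ _i ∈ Finset.univ.erase i₀, (1:ℕ)) = k - 1 := by
        rw [Finset.sum_const, smul_eq_mul, mul_one,
          Finset.card_erase_of_mem (Finset.mem_univ i₀), Finset.card_univ,
          Fintype.card_fin]
      have h4 : (if s ∈ V i₀ then (1:ℕ) else 0) = 0 := if_neg hnotin
      omega
  -- main counting
  have hcount : (∑ i, (Si i).card) ≤ (k - 1) * S'.card + 1 := by
    have hVcard : ∀ i, (V i).card = ∑ s ∈ S', if s ∈ V i then 1 else 0 := by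
      intro i
      rw [← Finset.card_filter]
      congr 1
      rw [Finset.filter_mem_eq_inter, Finset.inter_eq_right.2 (hV_sub i)]
    calc (∑ i, (Si i).card)
        ≤ ∑ i, (V i).card := Finset.sum_le_sum (fun i _ => stepA i)
      _ = ∑ i, ∑ s ∈ S', (if s ∈ V i then 1 else 0) := by
          apply Finset.sum_congr rfl
          intro i _
          exact hVcard i
      _ = ∑ s ∈ S', ∑ i : Fin k, (if s ∈ V i then 1 else 0) := Finset.sum_comm
      _ ≤ ∑ s ∈ S', ((k - 1) + (if s = μ then 1 else 0)) :=
          Finset.sum_le_sum hpoint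
      _ = (k - 1) * S'.card + ∑ s ∈ S', (if s = μ then 1 else 0) := by
          rw [Finset.sum_add_distrib, Finset.sum_const, smul_eq_mul, mul_comm]
      _ ≤ (k - 1) * S'.card + 1 := by
          apply Nat.add_le_add_left
          rw [← Finset.card_filter]
          calc (S'.filter (fun s => s = μ)).card ≤ ({μ} : Finset ℤ).card := by
                apply Finset.card_le_card
                intro s hs
                rw [Finset.mem_filter] at hs
                exact Finset.mem_singleton.2 hs.2
            _ = 1 := Finset.card_singleton μ
  have hgoal : (∑ i, (Si i).card) - 1 ≤ (k - 1) * S'.card := by omega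
  exact hgoal

theorem superadditivity_with_extreme_elements (k : ℕ) (hk : 2 ≤ k)
    (A : Fin k → Finset ℤ) (hA : ∀ i, (A i).Nonempty) :
    (Finset.univ.biUnion fun i =>
        ({(A i).min' (hA i), (A i).max' (hA i)} : Finset ℤ) +
          ∑ j ∈ Finset.univ.erase i, A j).card ≤ (∑ i, A i).card ∧
    (∑ i, (∑ j ∈ Finset.univ.erase i, A j).card) - 1 ≤
      (k - 1) * (Finset.univ.biUnion fun i =>
        ({(A i).min' (hA i), (A i).max' (hA i)} : Finset ℤ) +
          ∑ j ∈ Finset.univ.erase i, A j).card := by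
  exact gmr_main k hk A (fun i => (A i).min' (hA i)) (fun i => (A i).max' (hA i))
    (fun i => Finset.min'_mem _ _) (fun i => Finset.max'_mem _ _)
    (fun i y hy => Finset.min'_le _ _ hy) (fun i y hy => Finset.le_max' _ _ hy)
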